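/- Assume 0 < ν < 1 and let agent j play the time-threshold control b = Γ_{βʲ}(ψ) for some ψ ∈ [0,T]. If ν ≥ e^{−βʲψ}, then the threshold control a* = Γ_{βⁱ}(θ) with θ = min{ −(ln ν)/βʲ , T } is a best response of agent i: Jⁱ(a, Γ_{βʲ}(ψ)) ≤ Jⁱ(Γ_{βⁱ}(θ), Γ_{βʲ}(ψ)) for every admissible control a of agent i. (Paper's Theorem 2, second case.) -/

import Mathlib

open MeasureTheory Real Set

/-- Cumulative rate `A(t) = ∫₀ᵗ a(s) ds` of a control `a`. -/
noncomputable def cum (a : ℝ → ℝ) (t : ℝ) : ℝ := ∫ s in (0:ℝ)..t, a s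

/-- One-lock payoff of agent `i`:
`Jⁱ(a,b) = ∫₀ᵀ (e^{−B(s)} − ν A(s)) e^{−A(s)} a(s) ds − ν A(T) e^{−A(T)}`. -/
noncomputable def oneLockPayoff (T ν : ℝ) (a b : ℝ → ℝ) : ℝ :=
  (∫ s in (0:ℝ)..T,
      (Real.exp (-(cum b s)) - ν * cum a s) * Real.exp (-(cum a s)) * a s)
    - ν * cum a T * Real.exp (-(cum a T))

/-- Time-threshold control `Γ_β(ψ)(t) = β · 𝟙_{[0,ψ]}(t)`. -/
noncomputable def threshold (β ψ : ℝ) : ℝ → ℝ :=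
  fun t => if t ∈ Set.Icc (0:ℝ) ψ then β else 0


lemma ii_bdd {a : ℝ → ℝ} (ha : AEStronglyMeasurable a volume) {C : ℝ}
    (x y : ℝ) (h : ∀ t ∈ Set.uIoc x y, |a t| ≤ C) :
    IntervalIntegrable a volume x y := by
  rw [intervalIntegrable_iff]
  haveI : IsFiniteMeasure (volume.restrict (Set.uIoc x y)) := by
    constructor
    rw [Measure.restrict_apply_univ]
    exact lt_of_le_of_lt (measure_mono Set.uIoc_subset_uIcc) measure_Icc_lt_top
  refine Integrable.mono' (integrable_const C) ha.restrict ?_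
  filter_upwards [ae_restrict_mem measurableSet_uIoc] with t ht
  simpa using h t ht

lemma cum_zero (a : ℝ → ℝ) : cum a 0 = 0 := intervalIntegral.integral_same

lemma cum_sub {a : ℝ → ℝ} (ha : Measurable a) {C : ℝ} (h : ∀ s, |a s| ≤ C)
    (x y : ℝ) : cum a y - cum a x = ∫ s in x..y, a s := by
  have h1 := intervalIntegral.integral_add_adjacent_intervals
    (ii_bdd ha.aestronglyMeasurable 0 x (fun t _ => h t))
    (ii_bdd ha.aestronglyMeasurable x y (fun t _ => h t))
  simp only [cum]; linarith [h1]

lemma cum_cont {a : ℝ → ℝ} (ha : Measurable a) {C : ℝ} (h : ∀ s, |a s| ≤ C) :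
    Continuous (cum a) := by
  have hC : 0 ≤ C := le_trans (abs_nonneg _) (h 0)
  refine (LipschitzWith.of_dist_le_mul (K := C.toNNReal) fun x y => ?_).continuous
  rw [Real.dist_eq, Real.dist_eq, Real.coe_toNNReal _ hC]
  calc |cum a x - cum a y| = ‖∫ s in y..x, a s‖ := by
        rw [Real.norm_eq_abs, ← cum_sub ha h y x]
    _ ≤ C * |x - y| := intervalIntegral.norm_integral_le_of_norm_le_const
        (fun t ht => by rw [Real.norm_eq_abs]; exact h t)

lemma cum_mono {a : ℝ → ℝ} (ha : Measurable a) {C : ℝ}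
    (h : ∀ s, a s ∈ Set.Icc (0:ℝ) C) : Monotone (cum a) := by
  have habs : ∀ s, |a s| ≤ C := fun s => abs_le.2 ⟨by nlinarith [(h s).1, (h s).2, (h 0).1, (h 0).2], (h s).2⟩
  intro x y hxy
  have := cum_sub ha habs x y
  have h2 : 0 ≤ ∫ s in x..y, a s :=
    intervalIntegral.integral_nonneg hxy (fun u _ => (h u).1)
  linarith

lemma cum_nonneg {a : ℝ → ℝ} (ha : Measurable a) {C : ℝ}
    (h : ∀ s, a s ∈ Set.Icc (0:ℝ) C) {s : ℝ} (hs : 0 ≤ s) : 0 ≤ cum a s := by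
  have := cum_mono ha h hs
  rwa [cum_zero] at this

lemma cum_le {a : ℝ → ℝ} (ha : Measurable a) {C : ℝ}
    (h : ∀ s, a s ∈ Set.Icc (0:ℝ) C) {s : ℝ} (hs : 0 ≤ s) : cum a s ≤ C * s := by
  have hC : 0 ≤ C := le_trans (h 0).1 (h 0).2
  have habs : ∀ t, |a t| ≤ C := fun t => abs_le.2 ⟨by linarith [(h t).1], (h t).2⟩
  have : |cum a s| ≤ C * |s - 0| := by
    have := cum_sub ha habs 0 s
    rw [cum_zero] at this
    calc |cum a s| = ‖∫ u in (0:ℝ)..s, a u‖ := by rw [Real.norm_eq_abs, ← this, sub_zero]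
      _ ≤ C * |s - 0| := intervalIntegral.norm_integral_le_of_norm_le_const
          (fun t _ => by rw [Real.norm_eq_abs]; exact habs t)
  rw [sub_zero, abs_of_nonneg hs] at this
  exact le_trans (le_abs_self _) this
-- [chunk2]
lemma integral_one_sub_mul_exp (X : ℝ) :
    ∫ x in (0:ℝ)..X, (1 - x) * Real.exp (-x) = X * Real.exp (-X) := by
  have h : ∀ x ∈ Set.uIcc (0:ℝ) X, HasDerivAt (fun y => y * Real.exp (-y))
      ((1 - x) * Real.exp (-x)) x := by
    intro x _
    have h1 : HasDerivAt (fun y : ℝ => -y) (-1) x := (hasDerivAt_id x).neg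
    have h2 : HasDerivAt (fun y : ℝ => Real.exp (-y)) (Real.exp (-x) * (-1)) x := h1.exp
    have h3 := (hasDerivAt_id x).mul h2
    refine h3.congr_deriv ?_; simp; ring
  rw [intervalIntegral.integral_eq_sub_of_hasDerivAt h
    (((continuous_const.sub continuous_id).mul (continuous_id.neg.rexp)).intervalIntegrable _ _)]
  simp

lemma integral_exp_neg_mul (β x y : ℝ) :
    ∫ u in x..y, β * Real.exp (-(β * u)) = Real.exp (-(β * x)) - Real.exp (-(β * y)) := by
  have h : ∀ u ∈ Set.uIcc x y, HasDerivAt (fun v => -Real.exp (-(β * v)))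
      (β * Real.exp (-(β * u))) u := by
    intro u _
    have h1 : HasDerivAt (fun v : ℝ => -(β * v)) (-β) u := by
      exact (((hasDerivAt_id u).const_mul β).neg).congr_deriv (by ring)
    have h2 := h1.exp.neg
    refine h2.congr_deriv ?_; ring
  rw [intervalIntegral.integral_eq_sub_of_hasDerivAt h
    ((continuous_const.mul ((continuous_const.mul continuous_id).neg.rexp)).intervalIntegrable _ _)]
  ring

lemma integral_exp_neg (X : ℝ) : ∫ x in (0:ℝ)..X, Real.exp (-x) = 1 - Real.exp (-X) := by
  have h := integral_exp_neg_mul 1 0 X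
  simpa using h

lemma threshold_mem (β ψ : ℝ) (hβ : 0 ≤ β) (t : ℝ) : threshold β ψ t ∈ Set.Icc 0 β := by
  unfold threshold; split <;> simp [hβ]

lemma threshold_measurable (β ψ : ℝ) : Measurable (threshold β ψ) :=
  Measurable.ite measurableSet_Icc measurable_const measurable_const

lemma cum_threshold (β ψ : ℝ) (hψ : 0 ≤ ψ) {t : ℝ} (ht : 0 ≤ t) :
    cum (threshold β ψ) t = β * min t ψ := by
  have hind : threshold β ψ = Set.indicator (Set.Icc 0 ψ) (fun _ => β) := by
    ext s; simp [threshold, Set.indicator_apply]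
  have hset : Set.Icc (0:ℝ) ψ ∩ Set.Ioc 0 t = Set.Ioc 0 (min ψ t) := by
    ext s
    simp only [Set.mem_inter_iff, Set.mem_Icc, Set.mem_Ioc, le_min_iff]
    constructor
    · rintro ⟨⟨_, h1⟩, h2, h3⟩; exact ⟨h2, h1, h3⟩
    · rintro ⟨h1, h2, h3⟩; exact ⟨⟨le_of_lt h1, h2⟩, h1, h3⟩
  rw [cum, intervalIntegral.integral_of_le ht, hind,
    MeasureTheory.integral_indicator measurableSet_Icc,
    Measure.restrict_restrict measurableSet_Icc, hset, setIntegral_const,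
    measureReal_def, Real.volume_Ioc]
  rw [ENNReal.toReal_ofReal (by simp [le_min hψ ht])]
  simp [min_comm, mul_comm]
-- [key]
lemma clamp_dist {C x y : ℝ} (h0 : 0 ≤ y) (h1 : y ≤ C) :
    |y - max 0 (min x C)| ≤ |y - x| := by
  have hC : (0:ℝ) ≤ C := le_trans h0 h1
  rcases le_total x 0 with h | h
  · rw [min_eq_left (le_trans h hC), max_eq_left h, sub_zero, abs_of_nonneg h0,
      abs_of_nonneg (by linarith)]
    linarith
  · rcases le_total x C with h2 | h2
    · rw [min_eq_left h2, max_eq_right h]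
    · rw [min_eq_right h2, max_eq_right hC, abs_of_nonpos (by linarith),
        abs_of_nonpos (by linarith)]
      linarith

lemma key {C : ℝ} {a : ℝ → ℝ} (ha : Measurable a)
    (hab : ∀ s, a s ∈ Set.Icc (0:ℝ) C) {g : ℝ → ℝ} (hg : Continuous g)
    {t : ℝ} (ht : 0 ≤ t) :
    ∫ s in (0:ℝ)..t, g (cum a s) * a s = ∫ x in (0:ℝ)..(cum a t), g x := by
  have hC : 0 ≤ C := le_trans (hab 0).1 (hab 0).2
  have habs : ∀ s, |a s| ≤ C := fun s => abs_le.2 ⟨by linarith [(hab s).1], (hab s).2⟩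
  have hA : Continuous (cum a) := cum_cont ha habs
  have hAmem : ∀ s ∈ Set.Icc (0:ℝ) t, cum a s ∈ Set.Icc (0:ℝ) (C*t) := by
    intro s hs
    exact ⟨cum_nonneg ha hab hs.1,
      le_trans (cum_le ha hab hs.1) (mul_le_mul_of_nonneg_left hs.2 hC)⟩
  obtain ⟨M0, hM0⟩ := (isCompact_Icc (a := (0:ℝ)) (b := C * t)).exists_bound_of_continuousOn
    hg.continuousOn
  set M := max M0 0 with hMdef
  have hM : ∀ x ∈ Set.Icc (0:ℝ) (C*t), |g x| ≤ M := fun x hx =>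
    le_trans (by simpa using hM0 x hx) (le_max_left _ _)
  have hMpos : (0:ℝ) ≤ M := le_max_right _ _
  set K := C * t + 2 * M + 1 with hK
  have hKpos : 0 < K := by positivity
  set D := (∫ s in (0:ℝ)..t, g (cum a s) * a s) - ∫ x in (0:ℝ)..(cum a t), g x with hD
  have H : ∀ ε : ℝ, 0 < ε → |D| ≤ ε * K := by
    intro ε hε
    -- uniform continuity on the compact range
    have hu := (isCompact_Icc (a := (0:ℝ)) (b := C*t)).uniformContinuousOn_of_continuous
      hg.continuousOn
    rw [Metric.uniformContinuousOn_iff] at hu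
    obtain ⟨δ, hδ, hδ'⟩ := hu ε hε
    set η := min (δ/2) ε with hη
    have hηpos : 0 < η := lt_min (by linarith) hε
    have hηε : η ≤ ε := min_le_right _ _
    have hηδ : η < δ := lt_of_le_of_lt (min_le_left _ _) (by linarith)
    -- approximate by a continuous function
    have hfint : Integrable (Set.indicator (Set.Ioc 0 t) a) volume := by
      rw [integrable_indicator_iff measurableSet_Ioc]
      exact (ii_bdd ha.aestronglyMeasurable 0 t (fun s _ => habs s)).1
    obtain ⟨g₀, hg₀supp, hg₀close, hg₀cont, hg₀int⟩ :=
      hfint.exists_hasCompactSupport_integral_sub_le hηpos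
    set c : ℝ → ℝ := fun x => max 0 (min (g₀ x) C) with hc
    have hccont : Continuous c := continuous_const.max (hg₀cont.min continuous_const)
    have hcmem : ∀ x, c x ∈ Set.Icc (0:ℝ) C := fun x =>
      ⟨le_max_left _ _, max_le hC (min_le_right _ _)⟩
    have hcabs : ∀ x, |c x| ≤ C := fun x => abs_le.2 ⟨by linarith [(hcmem x).1], (hcmem x).2⟩
    have hAc : Continuous (cum c) := cum_cont hccont.measurable hcabs
    have hAcmem : ∀ s ∈ Set.Icc (0:ℝ) t, cum c s ∈ Set.Icc (0:ℝ) (C*t) := by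
      intro s hs
      exact ⟨cum_nonneg hccont.measurable hcmem hs.1,
        le_trans (cum_le hccont.measurable hcmem hs.1) (mul_le_mul_of_nonneg_left hs.2 hC)⟩
    have hclamp : ∀ x, |Set.indicator (Set.Ioc 0 t) a x - c x| ≤
        ‖Set.indicator (Set.Ioc 0 t) a x - g₀ x‖ := by
      intro x
      rw [Real.norm_eq_abs]
      have hy : Set.indicator (Set.Ioc 0 t) a x ∈ Set.Icc (0:ℝ) C := by
        by_cases hx : x ∈ Set.Ioc 0 t
        · rw [Set.indicator_of_mem hx]; exact hab x
        · rw [Set.indicator_of_notMem hx]; exact ⟨le_refl _, hC⟩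
      exact clamp_dist hy.1 hy.2
    have hacii : IntervalIntegrable (fun s => |a s - c s|) volume 0 t := by
      refine ii_bdd (C := C) ((ha.sub hccont.measurable).abs).aestronglyMeasurable 0 t
        (fun s _ => ?_)
      rw [abs_abs, Pi.sub_apply, abs_le]
      constructor <;> nlinarith [(hab s).1, (hab s).2, (hcmem s).1, (hcmem s).2]
    have hL1 : ∫ s in (0:ℝ)..t, |a s - c s| ≤ η := by
      rw [intervalIntegral.integral_of_le ht]
      have step1 : ∫ s in Set.Ioc (0:ℝ) t, |a s - c s| =
          ∫ s in Set.Ioc (0:ℝ) t, |Set.indicator (Set.Ioc 0 t) a s - c s| := by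
        refine setIntegral_congr_fun measurableSet_Ioc (fun s hs => ?_)
        rw [Set.indicator_of_mem hs]
      rw [step1]
      calc ∫ s in Set.Ioc (0:ℝ) t, |Set.indicator (Set.Ioc 0 t) a s - c s|
          ≤ ∫ s in Set.Ioc (0:ℝ) t, ‖Set.indicator (Set.Ioc 0 t) a s - g₀ s‖ := by
            refine setIntegral_mono_on
              (hf := ?_) (hg := ((hfint.sub hg₀int).norm).integrableOn)
              measurableSet_Ioc (fun x _ => hclamp x)
            · have : IntegrableOn (fun s => |a s - c s|) (Set.Ioc 0 t) volume := hacii.1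
              refine this.congr_fun (fun s hs => ?_) measurableSet_Ioc
              rw [Set.indicator_of_mem hs]
        _ ≤ ∫ s, ‖Set.indicator (Set.Ioc 0 t) a s - g₀ s‖ :=
            setIntegral_le_integral (hfint.sub hg₀int).norm
              (Filter.Eventually.of_forall fun x => norm_nonneg _)
        _ ≤ η := hg₀close
    have hclose : ∀ s ∈ Set.Icc (0:ℝ) t, |cum a s - cum c s| ≤ η := by
      intro s hs
      have e1 : cum a s - cum c s = ∫ u in (0:ℝ)..s, (a u - c u) := by
        rw [cum, cum, ← intervalIntegral.integral_sub
          (ii_bdd ha.aestronglyMeasurable 0 s (fun u _ => habs u))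
          (ii_bdd hccont.measurable.aestronglyMeasurable 0 s (fun u _ => hcabs u))]
      rw [e1]
      calc |∫ u in (0:ℝ)..s, (a u - c u)| ≤ ∫ u in (0:ℝ)..s, |a u - c u| :=
            intervalIntegral.abs_integral_le_integral_abs hs.1
        _ ≤ ∫ u in (0:ℝ)..t, |a u - c u| := by
            refine intervalIntegral.integral_mono_interval (le_refl _) hs.1 hs.2 ?_ hacii
            filter_upwards with u; positivity
        _ ≤ η := hL1
    -- FTC for the continuous approximation
    have hderiv : ∀ x ∈ Set.uIcc (0:ℝ) t, HasDerivAt (cum c) (c x) x := fun x _ =>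
      (hccont.integral_hasStrictDerivAt 0 x).hasDerivAt
    have hFTC := intervalIntegral.integral_comp_smul_deriv hderiv hccont.continuousOn hg
    simp only [smul_eq_mul, Function.comp] at hFTC
    have hcum0 : cum c 0 = 0 := cum_zero c
    rw [hcum0] at hFTC
    have hFTC' : (∫ s in (0:ℝ)..t, g (cum c s) * c s) = ∫ x in (0:ℝ)..(cum c t), g x := by
      rw [← hFTC]
      exact intervalIntegral.integral_congr (fun s _ => mul_comm _ _)
    have intL : IntervalIntegrable (fun s => g (cum a s) * a s) volume 0 t := by
      refine ii_bdd (C := M * C) ((hg.comp hA).measurable.mul ha).aestronglyMeasurable 0 t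
        (fun s hs => ?_)
      rw [Set.uIoc_of_le ht] at hs
      have hs' : s ∈ Set.Icc (0:ℝ) t := ⟨le_of_lt hs.1, hs.2⟩
      rw [Pi.mul_apply, abs_mul]
      exact mul_le_mul (hM _ (hAmem s hs')) (habs s) (abs_nonneg _) hMpos
    have intLc : IntervalIntegrable (fun s => g (cum c s) * c s) volume 0 t :=
      ((hg.comp hAc).mul hccont).intervalIntegrable _ _
    have intT1 : IntervalIntegrable (fun s => (g (cum a s) - g (cum c s)) * a s) volume 0 t := by
      refine ii_bdd (C := (M + M) * C)
        (((hg.comp hA).measurable.sub (hg.comp hAc).measurable).mul ha).aestronglyMeasurable 0 t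
        (fun s hs => ?_)
      rw [Set.uIoc_of_le ht] at hs
      have hs' : s ∈ Set.Icc (0:ℝ) t := ⟨le_of_lt hs.1, hs.2⟩
      rw [Pi.mul_apply, Pi.sub_apply, abs_mul]
      refine mul_le_mul (le_trans (abs_sub _ _) ?_) (habs s) (abs_nonneg _) (by linarith)
      exact add_le_add (hM _ (hAmem s hs')) (hM _ (hAcmem s hs'))
    have intT2 : IntervalIntegrable (fun s => g (cum c s) * (a s - c s)) volume 0 t := by
      refine ii_bdd (C := M * C)
        ((hg.comp hAc).measurable.mul (ha.sub hccont.measurable)).aestronglyMeasurable 0 t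
        (fun s hs => ?_)
      rw [Set.uIoc_of_le ht] at hs
      have hs' : s ∈ Set.Icc (0:ℝ) t := ⟨le_of_lt hs.1, hs.2⟩
      rw [Pi.mul_apply, Pi.sub_apply, abs_mul]
      refine mul_le_mul (hM _ (hAcmem s hs')) ?_ (abs_nonneg _) hMpos
      rw [abs_le]
      constructor <;> nlinarith [(hab s).1, (hab s).2, (hcmem s).1, (hcmem s).2]
    have hsplit : (∫ s in (0:ℝ)..t, g (cum a s) * a s) - (∫ s in (0:ℝ)..t, g (cum c s) * c s)
        = (∫ s in (0:ℝ)..t, (g (cum a s) - g (cum c s)) * a s)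
          + ∫ s in (0:ℝ)..t, g (cum c s) * (a s - c s) := by
      rw [← intervalIntegral.integral_add intT1 intT2, ← intervalIntegral.integral_sub intL intLc]
      exact intervalIntegral.integral_congr (fun s _ => by ring)
    have hT1 : |∫ s in (0:ℝ)..t, (g (cum a s) - g (cum c s)) * a s| ≤ ε * C * t := by
      have hb := intervalIntegral.norm_integral_le_of_norm_le_const (C := ε * C) (a := 0) (b := t)
        (f := fun s => (g (cum a s) - g (cum c s)) * a s) ?_
      · rw [Real.norm_eq_abs, sub_zero, abs_of_nonneg ht] at hb
        linarith [hb]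
      · intro s hs
        rw [Set.uIoc_of_le ht] at hs
        have hs' : s ∈ Set.Icc (0:ℝ) t := ⟨le_of_lt hs.1, hs.2⟩
        rw [Real.norm_eq_abs, abs_mul]
        have hd : dist (cum a s) (cum c s) < δ := by
          rw [Real.dist_eq]; exact lt_of_le_of_lt (hclose s hs') hηδ
        have h5 := hδ' _ (hAmem s hs') _ (hAcmem s hs') hd
        rw [Real.dist_eq] at h5
        exact mul_le_mul (le_of_lt h5) (habs s) (abs_nonneg _) (le_of_lt hε)
    have hT2 : |∫ s in (0:ℝ)..t, g (cum c s) * (a s - c s)| ≤ M * η := by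
      have hb := intervalIntegral.norm_integral_le_of_norm_le (μ := volume) (a := 0) (b := t)
        (f := fun s => g (cum c s) * (a s - c s)) (g := fun s => M * |a s - c s|) ht ?_
        (hacii.const_mul M)
      · have h2 : (∫ s in (0:ℝ)..t, M * |a s - c s|)
            = M * ∫ s in (0:ℝ)..t, |a s - c s| := intervalIntegral.integral_const_mul _ _
        have h3 : 0 ≤ ∫ s in (0:ℝ)..t, |a s - c s| :=
          intervalIntegral.integral_nonneg ht (fun u _ => abs_nonneg _)
        rw [Real.norm_eq_abs, h2] at hb
        exact le_trans hb (mul_le_mul_of_nonneg_left hL1 hMpos)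
      · filter_upwards with s hs
        have hs' : s ∈ Set.Icc (0:ℝ) t := ⟨le_of_lt hs.1, hs.2⟩
        rw [Real.norm_eq_abs, abs_mul]
        refine mul_le_mul (hM _ (hAcmem s hs')) le_rfl (abs_nonneg _) hMpos
    have hRdiff : (∫ x in (0:ℝ)..(cum c t), g x) - (∫ x in (0:ℝ)..(cum a t), g x)
        = ∫ x in (cum a t)..(cum c t), g x :=
      intervalIntegral.integral_interval_sub_left (hg.intervalIntegrable _ _)
        (hg.intervalIntegrable _ _)
    have hT3 : |∫ x in (cum a t)..(cum c t), g x| ≤ M * η := by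
      have h1 := hAmem t ⟨ht, le_refl t⟩
      have h2 := hAcmem t ⟨ht, le_refl t⟩
      have hb := intervalIntegral.norm_integral_le_of_norm_le_const (C := M) (f := g)
        (a := cum a t) (b := cum c t) ?_
      · rw [Real.norm_eq_abs] at hb
        refine le_trans hb (mul_le_mul_of_nonneg_left ?_ hMpos)
        rw [abs_sub_comm]
        exact hclose t ⟨ht, le_refl t⟩
      · intro x hx
        have hx' := Set.Ioc_subset_Icc_self hx
        rw [Real.norm_eq_abs]
        refine hM x ⟨le_trans (le_min h1.1 h2.1) hx'.1, le_trans hx'.2 (max_le h1.2 h2.2)⟩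
    have hDeq : D = ((∫ s in (0:ℝ)..t, (g (cum a s) - g (cum c s)) * a s)
          + ∫ s in (0:ℝ)..t, g (cum c s) * (a s - c s))
        + ∫ x in (cum a t)..(cum c t), g x := by
      rw [hD, ← hsplit, ← hRdiff, ← hFTC']
      ring
    rw [hDeq]
    have habs1 := abs_add_le ((∫ s in (0:ℝ)..t, (g (cum a s) - g (cum c s)) * a s)
          + ∫ s in (0:ℝ)..t, g (cum c s) * (a s - c s)) (∫ x in (cum a t)..(cum c t), g x)
    have habs2 := abs_add_le (∫ s in (0:ℝ)..t, (g (cum a s) - g (cum c s)) * a s)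
          (∫ s in (0:ℝ)..t, g (cum c s) * (a s - c s))
    have hMη : M * η ≤ M * ε := mul_le_mul_of_nonneg_left hηε hMpos
    rw [hK]
    nlinarith [hT1, hT2, hT3, hε.le]
  -- conclude D = 0
  have h2 : ∀ ε' : ℝ, 0 < ε' → |D| ≤ ε' := by
    intro ε' hε'
    have := H (ε'/K) (by positivity)
    rwa [div_mul_cancel₀ _ (ne_of_gt hKpos)] at this
  have hD0 : |D| ≤ 0 := by
    by_contra hcon
    push_neg at hcon
    have := h2 (|D|/2) (by linarith)
    linarith
  have : D = 0 := abs_eq_zero.mp (le_antisymm hD0 (abs_nonneg _))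
  linarith [this]
-- [fubini]
lemma fubini_step {θ : ℝ} (hθ : 0 ≤ θ) {h w : ℝ → ℝ} (hh : Continuous h)
    (hw : Measurable w) {Cw : ℝ} (hCw : 0 ≤ Cw) (hwb : ∀ s ∈ Set.Icc (0:ℝ) θ, |w s| ≤ Cw) :
    ∫ s in (0:ℝ)..θ, (∫ u in s..θ, h u) * w s
      = ∫ u in (0:ℝ)..θ, h u * ∫ s in (0:ℝ)..u, w s := by
  obtain ⟨Mh0, hMh0⟩ := (isCompact_Icc (a := (0:ℝ)) (b := θ)).exists_bound_of_continuousOn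
    hh.continuousOn
  set Mh := max Mh0 0 with hMhdef
  have hMh : ∀ x ∈ Set.Icc (0:ℝ) θ, |h x| ≤ Mh := fun x hx =>
    le_trans (by simpa using hMh0 x hx) (le_max_left _ _)
  have hMhpos : (0:ℝ) ≤ Mh := le_max_right _ _
  set F : ℝ → ℝ → ℝ := fun s u => if s < u then h u * w s else 0 with hF
  set μθ := volume.restrict (Set.Ioc (0:ℝ) θ) with hμθ
  haveI : IsFiniteMeasure μθ := by
    constructor
    rw [hμθ, Measure.restrict_apply_univ]
    exact measure_Ioc_lt_top
  have hFmeas : Measurable (Function.uncurry F) := by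
    refine Measurable.ite (measurableSet_lt measurable_fst measurable_snd) ?_ measurable_const
    exact (hh.measurable.comp measurable_snd).mul (hw.comp measurable_fst)
  have hint : Integrable (Function.uncurry F) (μθ.prod μθ) := by
    refine Integrable.mono' (integrable_const (Mh * Cw)) hFmeas.aestronglyMeasurable ?_
    rw [hμθ, Measure.prod_restrict]
    filter_upwards [ae_restrict_mem (measurableSet_Ioc.prod measurableSet_Ioc)] with p hp
    obtain ⟨hp1, hp2⟩ := hp
    rw [Real.norm_eq_abs, Function.uncurry]
    dsimp only [F]
    split
    · rw [abs_mul]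
      exact mul_le_mul (hMh _ (Set.Ioc_subset_Icc_self hp2))
        (hwb _ (Set.Ioc_subset_Icc_self hp1)) (abs_nonneg _) hMhpos
    · simpa using mul_nonneg hMhpos hCw
  have lhs_eq : ∫ s in (0:ℝ)..θ, (∫ u in s..θ, h u) * w s
      = ∫ s in Set.Ioc (0:ℝ) θ, ∫ u in Set.Ioc (0:ℝ) θ, F s u := by
    rw [intervalIntegral.integral_of_le hθ]
    refine setIntegral_congr_fun measurableSet_Ioc (fun s hs => ?_)
    have h1 : (∫ u in s..θ, h u) * w s = ∫ u in Set.Ioc s θ, h u * w s := by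
      rw [intervalIntegral.integral_of_le hs.2, ← integral_mul_const]
    rw [h1]
    have h2 : ∀ u, F s u = (Set.Ioi s).indicator (fun u => h u * w s) u := by
      intro u
      show (if s < u then h u * w s else 0) = _
      rw [Set.indicator_apply]
      by_cases hc : s < u
      · rw [if_pos hc, if_pos (Set.mem_Ioi.mpr hc)]
      · rw [if_neg hc, if_neg (fun hm => hc (Set.mem_Ioi.mp hm))]
    have hseteq : Set.Ioc s θ = Set.Ioc (0:ℝ) θ ∩ Set.Ioi s := by
      ext u
      simp only [Set.mem_Ioc, Set.mem_inter_iff, Set.mem_Ioi]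
      constructor
      · rintro ⟨h3, h4⟩; exact ⟨⟨lt_trans hs.1 h3, h4⟩, h3⟩
      · rintro ⟨⟨_, h4⟩, h5⟩; exact ⟨h5, h4⟩
    calc ∫ u in Set.Ioc s θ, h u * w s
        = ∫ u in Set.Ioc (0:ℝ) θ ∩ Set.Ioi s, h u * w s := by rw [hseteq]
      _ = ∫ u in Set.Ioc (0:ℝ) θ, (Set.Ioi s).indicator (fun u => h u * w s) u := by
          rw [setIntegral_indicator measurableSet_Ioi]
      _ = ∫ u in Set.Ioc (0:ℝ) θ, F s u := by
          refine setIntegral_congr_fun measurableSet_Ioc (fun u _ => (h2 u).symm)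
  have rhs_eq : ∫ u in (0:ℝ)..θ, h u * ∫ s in (0:ℝ)..u, w s
      = ∫ u in Set.Ioc (0:ℝ) θ, ∫ s in Set.Ioc (0:ℝ) θ, F s u := by
    rw [intervalIntegral.integral_of_le hθ]
    refine setIntegral_congr_fun measurableSet_Ioc (fun u hu => ?_)
    have h2 : ∀ s, F s u = (Set.Iio u).indicator (fun s => h u * w s) s := by
      intro s
      show (if s < u then h u * w s else 0) = _
      rw [Set.indicator_apply]
      by_cases hc : s < u
      · rw [if_pos hc, if_pos (Set.mem_Iio.mpr hc)]
      · rw [if_neg hc, if_neg (fun hm => hc (Set.mem_Iio.mp hm))]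
    calc h u * ∫ s in (0:ℝ)..u, w s
        = h u * ∫ s in Set.Ioo (0:ℝ) u, w s := by
          rw [intervalIntegral.integral_of_le (le_of_lt hu.1), integral_Ioc_eq_integral_Ioo]
      _ = ∫ s in Set.Ioo (0:ℝ) u, h u * w s := by rw [integral_const_mul]
      _ = ∫ s in Set.Ioc (0:ℝ) θ ∩ Set.Iio u, h u * w s := by
          have hseteq : Set.Ioo (0:ℝ) u = Set.Ioc (0:ℝ) θ ∩ Set.Iio u := by
            ext s
            simp only [Set.mem_Ioo, Set.mem_inter_iff, Set.mem_Ioc, Set.mem_Iio]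
            constructor
            · rintro ⟨h3, h4⟩; exact ⟨⟨h3, le_trans (le_of_lt h4) hu.2⟩, h4⟩
            · rintro ⟨⟨h3, _⟩, h5⟩; exact ⟨h3, h5⟩
          rw [hseteq]
      _ = ∫ s in Set.Ioc (0:ℝ) θ, (Set.Iio u).indicator (fun s => h u * w s) s := by
          rw [setIntegral_indicator measurableSet_Iio]
      _ = ∫ s in Set.Ioc (0:ℝ) θ, F s u := by
          refine setIntegral_congr_fun measurableSet_Ioc (fun s _ => (h2 s).symm)
  rw [lhs_eq, rhs_eq]
  exact MeasureTheory.integral_integral_swap hint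

lemma J_eq (T ν βi βj ψ : ℝ) (hT : 0 < T) (hν0 : 0 < ν) (hν1 : ν < 1)
    (hβi : 0 < βi) (hβj : 0 < βj) (hψ0 : 0 ≤ ψ) (hψT : ψ ≤ T)
    (hθψ : -Real.log ν / βj ≤ ψ)
    (a : ℝ → ℝ) (ha : Measurable a) (hab : ∀ t, a t ∈ Set.Icc (0:ℝ) βi) :
    oneLockPayoff T ν a (threshold βj ψ)
      = (∫ u in (0:ℝ)..(-Real.log ν / βj),
          βj * Real.exp (-(βj * u)) * (1 - Real.exp (-(cum a u))))
        + ∫ s in (-Real.log ν / βj)..T,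
            (Real.exp (-(cum (threshold βj ψ) s)) - ν) * Real.exp (-(cum a s)) * a s := by
  set θ := -Real.log ν / βj with hθdef
  set b := threshold βj ψ with hbdef
  have hθpos : 0 < θ := div_pos (neg_pos.2 (Real.log_neg hν0 hν1)) hβj
  have hθT : θ ≤ T := le_trans hθψ hψT
  have hexpθ : Real.exp (-(βj * θ)) = ν := by
    have : βj * θ = -Real.log ν := by
      rw [hθdef]; field_simp
    rw [this, neg_neg, Real.exp_log hν0]
  have habs : ∀ s, |a s| ≤ βi := fun s =>
    abs_le.2 ⟨by linarith [(hab s).1], (hab s).2⟩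
  have hbmeas : Measurable b := threshold_measurable βj ψ
  have hbmem : ∀ t, b t ∈ Set.Icc (0:ℝ) βj := threshold_mem βj ψ hβj.le
  have hbabs : ∀ s, |b s| ≤ βj := fun s =>
    abs_le.2 ⟨by linarith [(hbmem s).1], (hbmem s).2⟩
  have hAcont : Continuous (cum a) := cum_cont ha habs
  have hBcont : Continuous (cum b) := cum_cont hbmeas hbabs
  -- Step A : payoff rewrite
  have I1 := key ha hab (g := fun x => (1 - x) * Real.exp (-x))
    ((continuous_const.sub continuous_id).mul (continuous_id.neg.rexp)) hT.le
  rw [integral_one_sub_mul_exp] at I1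
  have hf1meas : Measurable (fun s =>
      (Real.exp (-(cum b s)) - ν * cum a s) * Real.exp (-(cum a s)) * a s) :=
    ((((Real.continuous_exp.comp hBcont.neg).sub (continuous_const.mul hAcont)).mul
      (Real.continuous_exp.comp hAcont.neg)).measurable).mul ha
  have hg1meas : Measurable (fun s => (1 - cum a s) * Real.exp (-(cum a s)) * a s) :=
    (((continuous_const.sub hAcont).mul (Real.continuous_exp.comp hAcont.neg)).measurable).mul ha
  have key_bounds : ∀ s ∈ Set.uIoc (0:ℝ) T, 0 ≤ cum a s ∧ cum a s ≤ βi * T ∧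
      0 ≤ cum b s ∧ Real.exp (-(cum a s)) ≤ 1 ∧ Real.exp (-(cum b s)) ≤ 1 := by
    intro s hs
    rw [Set.uIoc_of_le hT.le] at hs
    have hs0 : 0 ≤ s := hs.1.le
    have hA0 : 0 ≤ cum a s := cum_nonneg ha hab hs0
    have hB0 : 0 ≤ cum b s := cum_nonneg hbmeas hbmem hs0
    have hAle : cum a s ≤ βi * T :=
      le_trans (cum_le ha hab hs0) (by nlinarith [hs.2])
    exact ⟨hA0, hAle, hB0, Real.exp_le_one_iff.2 (by linarith),
      Real.exp_le_one_iff.2 (by linarith)⟩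
  have int_f1 : IntervalIntegrable (fun s =>
      (Real.exp (-(cum b s)) - ν * cum a s) * Real.exp (-(cum a s)) * a s) volume 0 T := by
    refine ii_bdd (C := (1 + ν * (βi * T)) * βi) hf1meas.aestronglyMeasurable 0 T
      (fun s hs => ?_)
    obtain ⟨hA0, hAle, hB0, hE1, hE2⟩ := key_bounds s hs
    have e1 : |Real.exp (-(cum b s)) - ν * cum a s| ≤ 1 + ν * (βi * T) := by
      refine le_trans (abs_sub _ _) ?_
      rw [abs_of_nonneg (Real.exp_nonneg _), abs_of_nonneg (mul_nonneg hν0.le hA0)]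
      have := mul_le_mul_of_nonneg_left hAle hν0.le
      linarith
    rw [abs_mul, abs_mul, abs_of_nonneg (Real.exp_nonneg (-(cum a s)))]
    calc |Real.exp (-(cum b s)) - ν * cum a s| * Real.exp (-(cum a s)) * |a s|
        ≤ (1 + ν * (βi * T)) * 1 * βi := by
          refine mul_le_mul (mul_le_mul e1 hE1 (Real.exp_nonneg _) (by positivity))
            (habs s) (abs_nonneg _) (by positivity)
      _ = (1 + ν * (βi * T)) * βi := by ring
  have int_g1 : IntervalIntegrable (fun s =>
      (1 - cum a s) * Real.exp (-(cum a s)) * a s) volume 0 T := by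
    refine ii_bdd (C := (1 + βi * T) * βi) hg1meas.aestronglyMeasurable 0 T (fun s hs => ?_)
    obtain ⟨hA0, hAle, hB0, hE1, hE2⟩ := key_bounds s hs
    have e1 : |1 - cum a s| ≤ 1 + βi * T := by
      refine le_trans (abs_sub _ _) ?_
      rw [abs_one, abs_of_nonneg hA0]
      linarith
    rw [abs_mul, abs_mul, abs_of_nonneg (Real.exp_nonneg (-(cum a s)))]
    calc |1 - cum a s| * Real.exp (-(cum a s)) * |a s|
        ≤ (1 + βi * T) * 1 * βi := by
          refine mul_le_mul (mul_le_mul e1 hE1 (Real.exp_nonneg _) (by positivity))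
            (habs s) (abs_nonneg _) (by positivity)
      _ = (1 + βi * T) * βi := by ring
  have main1 : oneLockPayoff T ν a b
      = ∫ s in (0:ℝ)..T, (Real.exp (-(cum b s)) - ν) * Real.exp (-(cum a s)) * a s := by
    unfold oneLockPayoff
    rw [mul_assoc ν (cum a T) (Real.exp (-(cum a T))), ← I1,
      ← intervalIntegral.integral_const_mul,
      ← intervalIntegral.integral_sub int_f1 (int_g1.const_mul ν)]
    exact intervalIntegral.integral_congr (fun s _ => by ring)
  -- split the integral at θ
  have int_J : IntervalIntegrable (fun s =>
      (Real.exp (-(cum b s)) - ν) * Real.exp (-(cum a s)) * a s) volume 0 T := by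
    have hJmeas : Measurable (fun s =>
        (Real.exp (-(cum b s)) - ν) * Real.exp (-(cum a s)) * a s) :=
      ((((Real.continuous_exp.comp hBcont.neg).sub continuous_const).mul
        (Real.continuous_exp.comp hAcont.neg)).measurable).mul ha
    refine ii_bdd (C := (1 + ν) * βi) hJmeas.aestronglyMeasurable 0 T (fun s hs => ?_)
    obtain ⟨hA0, hAle, hB0, hE1, hE2⟩ := key_bounds s hs
    have e1 : |Real.exp (-(cum b s)) - ν| ≤ 1 + ν := by
      refine le_trans (abs_sub _ _) ?_
      rw [abs_of_nonneg (Real.exp_nonneg _), abs_of_nonneg hν0.le]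
      linarith
    rw [abs_mul, abs_mul, abs_of_nonneg (Real.exp_nonneg (-(cum a s)))]
    calc |Real.exp (-(cum b s)) - ν| * Real.exp (-(cum a s)) * |a s|
        ≤ (1 + ν) * 1 * βi := by
          refine mul_le_mul (mul_le_mul e1 hE1 (Real.exp_nonneg _) (by positivity))
            (habs s) (abs_nonneg _) (by positivity)
      _ = (1 + ν) * βi := by ring
  have hsub1 : Set.uIcc (0:ℝ) θ ⊆ Set.uIcc (0:ℝ) T := by
    rw [Set.uIcc_of_le hθpos.le, Set.uIcc_of_le hT.le]
    exact Set.Icc_subset_Icc le_rfl hθT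
  have hsub2 : Set.uIcc θ T ⊆ Set.uIcc (0:ℝ) T := by
    rw [Set.uIcc_of_le hθT, Set.uIcc_of_le hT.le]
    exact Set.Icc_subset_Icc hθpos.le le_rfl
  have hsplit : (∫ s in (0:ℝ)..T, (Real.exp (-(cum b s)) - ν) * Real.exp (-(cum a s)) * a s)
      = (∫ s in (0:ℝ)..θ, (Real.exp (-(cum b s)) - ν) * Real.exp (-(cum a s)) * a s)
        + ∫ s in θ..T, (Real.exp (-(cum b s)) - ν) * Real.exp (-(cum a s)) * a s :=
    (intervalIntegral.integral_add_adjacent_intervals (int_J.mono_set hsub1)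
      (int_J.mono_set hsub2)).symm
  -- transform the head integral
  have hw : Measurable (fun s => Real.exp (-(cum a s)) * a s) :=
    (Real.continuous_exp.comp hAcont.neg).measurable.mul ha
  have hwb : ∀ s ∈ Set.Icc (0:ℝ) θ, |Real.exp (-(cum a s)) * a s| ≤ βi := by
    intro s hs
    rw [abs_mul, abs_of_nonneg (Real.exp_nonneg _)]
    have hA0 : 0 ≤ cum a s := cum_nonneg ha hab hs.1
    have := Real.exp_le_one_iff.2 (by linarith : -(cum a s) ≤ 0)
    nlinarith [habs s, abs_nonneg (a s)]
  have head1 : (∫ s in (0:ℝ)..θ, (Real.exp (-(cum b s)) - ν) * Real.exp (-(cum a s)) * a s)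
      = ∫ s in (0:ℝ)..θ, (∫ u in s..θ, βj * Real.exp (-(βj * u)))
          * (Real.exp (-(cum a s)) * a s) := by
    refine intervalIntegral.integral_congr (fun s hs => ?_)
    rw [Set.uIcc_of_le hθpos.le] at hs
    rw [integral_exp_neg_mul, hexpθ, hbdef, cum_threshold βj ψ hψ0 hs.1,
      min_eq_left (le_trans hs.2 hθψ)]
    ring
  have head2 := fubini_step hθpos.le
    (h := fun u => βj * Real.exp (-(βj * u)))
    (w := fun s => Real.exp (-(cum a s)) * a s)
    (continuous_const.mul ((continuous_const.mul continuous_id).neg.rexp)) hw hβi.le hwb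
  have head3 : (∫ u in (0:ℝ)..θ, βj * Real.exp (-(βj * u))
        * ∫ s in (0:ℝ)..u, Real.exp (-(cum a s)) * a s)
      = ∫ u in (0:ℝ)..θ, βj * Real.exp (-(βj * u)) * (1 - Real.exp (-(cum a u))) := by
    refine intervalIntegral.integral_congr (fun u hu => ?_)
    rw [Set.uIcc_of_le hθpos.le] at hu
    have hk := key ha hab (g := fun x => Real.exp (-x)) (continuous_id.neg.rexp) hu.1
    rw [integral_exp_neg] at hk
    rw [hk]
  rw [main1, hsplit, head1, head2, head3]

/-- Paper's Theorem 2, second case: if agent `j` plays `Γ_{βʲ}(ψ)` and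
`ν ≥ e^{−βʲψ}`, then the threshold control `Γ_{βⁱ}(θ)` with
`θ = min{−(ln ν)/βʲ, T}` is a best response of agent `i`. -/
theorem best_response_threshold
    (T ν βi βj ψ : ℝ) (hT : 0 < T) (hν0 : 0 < ν) (hν1 : ν < 1)
    (hβi : 0 < βi) (hβj : 0 < βj) (hψ : ψ ∈ Icc (0:ℝ) T)
    (hcase : Real.exp (-(βj * ψ)) ≤ ν) :
    ∀ a : ℝ → ℝ, Measurable a → (∀ t ∈ Icc (0:ℝ) T, a t ∈ Icc (0:ℝ) βi) →
      oneLockPayoff T ν a (threshold βj ψ)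
        ≤ oneLockPayoff T ν (threshold βi (min (-(Real.log ν) / βj) T))
            (threshold βj ψ) := by
  intro a ha hab
  have hlog : Real.log ν < 0 := Real.log_neg hν0 hν1
  have hθpos : 0 < -Real.log ν / βj := div_pos (neg_pos.2 hlog) hβj
  have hθψ : -Real.log ν / βj ≤ ψ := by
    rw [← Real.exp_log hν0] at hcase
    have h1 := Real.exp_le_exp.1 hcase
    rw [div_le_iff₀ hβj]
    linarith
  have hθT : -Real.log ν / βj ≤ T := le_trans hθψ hψ.2
  have hmin : min (-Real.log ν / βj) T = -Real.log ν / βj := min_eq_left hθT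
  rw [hmin]
  -- globalize the control a
  set aa : ℝ → ℝ := fun t => if t ∈ Set.Icc (0:ℝ) T then a t else 0 with haadef
  have haam : Measurable aa := Measurable.ite measurableSet_Icc ha measurable_const
  have haaeq : ∀ t ∈ Set.Icc (0:ℝ) T, aa t = a t := by
    intro t ht
    simp only [haadef]
    rw [if_pos ht]
  have haab : ∀ t, aa t ∈ Set.Icc (0:ℝ) βi := by
    intro t
    by_cases ht : t ∈ Set.Icc (0:ℝ) T
    · rw [haaeq t ht]; exact hab t ht
    · simp only [haadef]; rw [if_neg ht]; exact ⟨le_refl 0, hβi.le⟩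
  have hcumeq : ∀ s ∈ Set.Icc (0:ℝ) T, cum a s = cum aa s := by
    intro s hs
    refine intervalIntegral.integral_congr (fun u hu => ?_)
    rw [Set.uIcc_of_le hs.1] at hu
    exact (haaeq u ⟨hu.1, le_trans hu.2 hs.2⟩).symm
  have hJswap : oneLockPayoff T ν a (threshold βj ψ)
      = oneLockPayoff T ν aa (threshold βj ψ) := by
    unfold oneLockPayoff
    rw [hcumeq T ⟨hT.le, le_refl T⟩]
    congr 1
    refine intervalIntegral.integral_congr (fun s hs => ?_)
    rw [Set.uIcc_of_le hT.le] at hs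
    rw [hcumeq s hs, haaeq s hs]
  rw [hJswap,
    J_eq T ν βi βj ψ hT hν0 hν1 hβi hβj hψ.1 hψ.2 hθψ aa haam haab,
    J_eq T ν βi βj ψ hT hν0 hν1 hβi hβj hψ.1 hψ.2 hθψ
      (threshold βi (-Real.log ν / βj))
      (threshold_measurable βi (-Real.log ν / βj))
      (threshold_mem βi (-Real.log ν / βj) hβi.le)]
  -- tail of aa is nonpositive
  have hβθ : βj * (-Real.log ν / βj) = -Real.log ν := by field_simp
  have tail_le : (∫ s in (-Real.log ν / βj)..T,
      (Real.exp (-(cum (threshold βj ψ) s)) - ν) * Real.exp (-(cum aa s)) * aa s) ≤ 0 := by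
    have h := intervalIntegral.integral_nonneg (μ := volume)
      (f := fun s => -((Real.exp (-(cum (threshold βj ψ) s)) - ν)
        * Real.exp (-(cum aa s)) * aa s)) hθT ?_
    · rw [intervalIntegral.integral_neg] at h
      linarith
    · intro u hu
      have hu0 : 0 ≤ u := le_trans hθpos.le hu.1
      have h1 : Real.exp (-(cum (threshold βj ψ) u)) ≤ ν := by
        rw [cum_threshold βj ψ hψ.1 hu0]
        have hmin2 : -Real.log ν / βj ≤ min u ψ := le_min hu.1 hθψ
        calc Real.exp (-(βj * min u ψ))
            ≤ Real.exp (-(βj * (-Real.log ν / βj))) := by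
              apply Real.exp_le_exp.2
              nlinarith
          _ = ν := by rw [hβθ, neg_neg, Real.exp_log hν0]
      have h2 : 0 ≤ aa u := (haab u).1
      have h3 := mul_nonneg (mul_nonneg (sub_nonneg.2 h1)
        (Real.exp_nonneg (-(cum aa u)))) h2
      nlinarith [h3]
  -- tail of the threshold control vanishes
  have tail_star : (∫ s in (-Real.log ν / βj)..T,
      (Real.exp (-(cum (threshold βj ψ) s)) - ν)
        * Real.exp (-(cum (threshold βi (-Real.log ν / βj)) s))
        * threshold βi (-Real.log ν / βj) s) = 0 := by
    rw [intervalIntegral.integral_of_le hθT]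
    have hzero : ∀ s ∈ Set.Ioc (-Real.log ν / βj) T,
        (Real.exp (-(cum (threshold βj ψ) s)) - ν)
          * Real.exp (-(cum (threshold βi (-Real.log ν / βj)) s))
          * threshold βi (-Real.log ν / βj) s = 0 := by
      intro s hs
      have : threshold βi (-Real.log ν / βj) s = 0 := by
        unfold threshold
        rw [if_neg (fun hm => absurd hm.2 (not_le.2 hs.1))]
      rw [this, mul_zero]
    rw [setIntegral_congr_fun measurableSet_Ioc hzero]
    simp
  -- head comparison
  have haaabs : ∀ s, |aa s| ≤ βi := fun s =>
    abs_le.2 ⟨by linarith [(haab s).1], (haab s).2⟩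
  have hAacont : Continuous (cum aa) := cum_cont haam haaabs
  have hAscont : Continuous (cum (threshold βi (-Real.log ν / βj))) :=
    cum_cont (threshold_measurable _ _) (fun s => abs_le.2
      ⟨by linarith [(threshold_mem βi (-Real.log ν / βj) hβi.le s).1],
        (threshold_mem βi (-Real.log ν / βj) hβi.le s).2⟩)
  have head_le : (∫ u in (0:ℝ)..(-Real.log ν / βj),
        βj * Real.exp (-(βj * u)) * (1 - Real.exp (-(cum aa u))))
      ≤ ∫ u in (0:ℝ)..(-Real.log ν / βj),
        βj * Real.exp (-(βj * u))
          * (1 - Real.exp (-(cum (threshold βi (-Real.log ν / βj)) u))) := by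
    refine intervalIntegral.integral_mono_on hθpos.le ?_ ?_ ?_
    · exact ((continuous_const.mul ((continuous_const.mul continuous_id).neg.rexp)).mul
        (continuous_const.sub (Real.continuous_exp.comp hAacont.neg))).intervalIntegrable _ _
    · exact ((continuous_const.mul ((continuous_const.mul continuous_id).neg.rexp)).mul
        (continuous_const.sub (Real.continuous_exp.comp hAscont.neg))).intervalIntegrable _ _
    · intro u hu
      have h1 : cum aa u ≤ βi * u := cum_le haam haab hu.1
      have h2 : cum (threshold βi (-Real.log ν / βj)) u = βi * u := by
        rw [cum_threshold βi (-Real.log ν / βj) hθpos.le hu.1, min_eq_left hu.2]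
      rw [h2]
      have h3 : Real.exp (-(βi * u)) ≤ Real.exp (-(cum aa u)) :=
        Real.exp_le_exp.2 (by linarith)
      have hpos : (0:ℝ) ≤ βj * Real.exp (-(βj * u)) := by positivity
      nlinarith
  linarith [tail_le, tail_star, head_le]
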